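/- arXiv:1604.01465 — 2 statements merged into one kernel-verified Lean document; each statement's English description precedes it below -/
import Mathlib

section
/- (Half-space kernel lower bound at infinity.) Let n ≥ 1 and α ∈ (0,2). There exists a constant C > 0 depending only on n and α such that for every λ ∈ ℝ there is R > 0 (depending on n, α, λ) with the property: for every x ∈ Σ_λ with |x| ≥ R, ∫_{{y ∈ ℝⁿ : y₁ > λ}} |x - y|^{-(n+α)} dy ≥ C·|x|^{-α}. Equivalently, since the map y ↦ y^λ carries Σ_λ onto {y₁ > λ} preserving Lebesgue measure, ∫_{Σ_λ} |x - y^λ|^{-(n+α)} dy ≥ C·|x|^{-α} for all x ∈ Σ_λ with |x| ≥ R. -/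
open MeasureTheory Metric Filter Set Topology

noncomputable section

abbrev Rn (n : ℕ) := EuclideanSpace ℝ (Fin n)

/-- Membership in the weighted space `L_α`. -/
def MemLspace (n : ℕ) (α : ℝ) (u : Rn n → ℝ) : Prop :=
  Integrable (fun x : Rn n => |u x| / (1 + ‖x‖ ^ ((n : ℝ) + α)))

/-- `u` is `C^{1,1}` near `x`: differentiable with Lipschitz gradient in a ball around `x`. -/
def C11Near {n : ℕ} (u : Rn n → ℝ) (x : Rn n) : Prop :=
  ∃ ε > 0, ∃ K : NNReal,
    (∀ y ∈ ball x ε, DifferentiableAt ℝ u y) ∧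
    LipschitzOnWith K (fderiv ℝ u) (ball x ε)

/-- The principal value integral defining `(-Δ)^{α/2} u (x)` (with normalization constant
`Cna`) converges to `L`. -/
def HasFracLap (n : ℕ) (α Cna : ℝ) (u : Rn n → ℝ) (x : Rn n) (L : ℝ) : Prop :=
  Tendsto
    (fun ε : ℝ =>
      Cna * ∫ z in {z : Rn n | ε ≤ ‖x - z‖}, (u x - u z) / ‖x - z‖ ^ ((n : ℝ) + α))
    (𝓝[>] (0 : ℝ)) (𝓝 L)

/-- Reflection of `x` across the hyperplane `{x : x₁ = lam}`. -/
def reflPt {n : ℕ} (hn : 0 < n) (lam : ℝ) (x : Rn n) : Rn n :=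
  WithLp.toLp 2 (Function.update x ⟨0, hn⟩ (2 * lam - x ⟨0, hn⟩))

/-- The half space `Σ_λ = {x : x₁ < λ}`. -/
def SigmaLam {n : ℕ} (hn : 0 < n) (lam : ℝ) : Set (Rn n) :=
  {x : Rn n | x ⟨0, hn⟩ < lam}

namespace HKAux

variable {n : ℕ}

lemma abs_coord_le_norm (x : Rn n) (i : Fin n) : |x i| ≤ ‖x‖ := by
  rw [EuclideanSpace.norm_eq, ← Real.sqrt_sq_eq_abs]
  apply Real.sqrt_le_sqrt
  have := Finset.single_le_sum (f := fun j => ‖x j‖ ^ 2)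
    (fun j _ => sq_nonneg _) (Finset.mem_univ i)
  simpa [Real.norm_eq_abs, sq_abs] using this

lemma reflPt_apply_same (hn : 0 < n) (lam : ℝ) (x : Rn n) :
    reflPt hn lam x ⟨0, hn⟩ = 2 * lam - x ⟨0, hn⟩ := by
  simp [reflPt]

lemma reflPt_apply_ne (hn : 0 < n) (lam : ℝ) (x : Rn n) {j : Fin n} (hj : j ≠ ⟨0, hn⟩) :
    reflPt hn lam x j = x j := by
  simp [reflPt, Function.update_of_ne hj]

lemma reflPt_reflPt (hn : 0 < n) (lam : ℝ) (x : Rn n) :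
    reflPt hn lam (reflPt hn lam x) = x := by
  ext j
  by_cases hj : j = ⟨0, hn⟩
  · subst hj
    rw [reflPt_apply_same, reflPt_apply_same]; ring
  · rw [reflPt_apply_ne hn lam _ hj, reflPt_apply_ne hn lam _ hj]

lemma dist_reflPt (hn : 0 < n) (lam : ℝ) (a b : Rn n) :
    dist (reflPt hn lam a) (reflPt hn lam b) = dist a b := by
  rw [EuclideanSpace.dist_eq, EuclideanSpace.dist_eq]
  congr 1
  apply Finset.sum_congr rfl
  intro j _
  by_cases hj : j = ⟨0, hn⟩
  · subst hj
    rw [reflPt_apply_same, reflPt_apply_same, Real.dist_eq, Real.dist_eq]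
    congr 1
    rw [show 2 * lam - a ⟨0, hn⟩ - (2 * lam - b ⟨0, hn⟩) = -(a ⟨0, hn⟩ - b ⟨0, hn⟩) by ring,
      abs_neg]
  · rw [reflPt_apply_ne hn lam _ hj, reflPt_apply_ne hn lam _ hj]

lemma measurable_reflPt (hn : 0 < n) (lam : ℝ) : Measurable (reflPt hn lam) := by
  have heq : reflPt hn lam = fun x : Rn n =>
      x + (2 * lam - 2 * x ⟨0, hn⟩) • EuclideanSpace.single ⟨0, hn⟩ (1:ℝ) := by
    funext x; ext j
    by_cases hj : j = ⟨0, hn⟩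
    · subst hj
      rw [reflPt_apply_same]
      simp [PiLp.add_apply, PiLp.smul_apply, EuclideanSpace.single_apply]
      ring
    · rw [reflPt_apply_ne hn lam _ hj]
      simp [PiLp.add_apply, PiLp.smul_apply, EuclideanSpace.single_apply, hj]
  rw [heq]
  have hcoord : Continuous (fun x : Rn n => x ⟨0, hn⟩) :=
    (EuclideanSpace.proj (⟨0, hn⟩ : Fin n)).continuous
  exact (continuous_id.add
    (((continuous_const.sub (continuous_const.mul hcoord)).smul continuous_const))).measurable

/-- For `x, y` both strictly below the hyperplane, the reflected point is farther. -/
lemma norm_sub_le_norm_sub_reflPt (hn : 0 < n) (lam : ℝ) {x y : Rn n}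
    (hx : x ⟨0, hn⟩ < lam) (hy : y ⟨0, hn⟩ < lam) :
    ‖x - y‖ ≤ ‖x - reflPt hn lam y‖ := by
  rw [← dist_eq_norm, ← dist_eq_norm, EuclideanSpace.dist_eq, EuclideanSpace.dist_eq]
  apply Real.sqrt_le_sqrt
  apply Finset.sum_le_sum
  intro j _
  by_cases hj : j = ⟨0, hn⟩
  · subst hj
    rw [reflPt_apply_same, Real.dist_eq, Real.dist_eq]
    apply pow_le_pow_left₀ (abs_nonneg _)
    have habs : |x ⟨0, hn⟩ - (2 * lam - y ⟨0, hn⟩)| = 2 * lam - x ⟨0, hn⟩ - y ⟨0, hn⟩ := by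
      rw [abs_of_nonpos (by linarith)]; ring
    rw [habs]
    rw [abs_le]
    constructor <;> linarith
  · rw [reflPt_apply_ne hn lam _ hj]

/-- Integrability of the kernel on a set staying at distance `≥ δ` from `x`,
composed with a measurable map `g` that does not decrease distances from `x`. -/
lemma integrableOn_kernel (hn : 0 < n) {α : ℝ} (hα : 0 < α) (x : Rn n) {S : Set (Rn n)}
    (hS : MeasurableSet S) {g : Rn n → Rn n} (hg : Measurable g) {δ : ℝ} (hδ : 0 < δ)
    (h1 : ∀ y ∈ S, δ ≤ ‖x - g y‖) (h2 : ∀ y ∈ S, ‖x - y‖ ≤ ‖x - g y‖) :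
    IntegrableOn (fun y => ‖x - g y‖ ^ (-((n : ℝ) + α))) S := by
  set e : ℝ := (n : ℝ) + α with he_def
  have he : 0 < e := by positivity
  set c : ℝ := min δ 1 / 2 with hc_def
  have hc : 0 < c := by
    apply div_pos _ two_pos
    exact lt_min hδ one_pos
  have key : ∀ y ∈ S, c * (1 + ‖x - y‖) ≤ ‖x - g y‖ := by
    intro y hy
    have k1 := h1 y hy
    have k2 := h2 y hy
    have hc1 : c ≤ δ / 2 := by
      have := min_le_left δ 1; rw [hc_def]; linarith
    have hc2 : c ≤ 1 / 2 := by
      have := min_le_right δ 1; rw [hc_def]; linarith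
    have hnn : (0:ℝ) ≤ ‖x - y‖ := norm_nonneg _
    nlinarith
  have hint : Integrable (fun y : Rn n => c ^ (-e) * (1 + ‖x - y‖) ^ (-e)) := by
    apply Integrable.const_mul
    rw [integrable_comp_sub_left (fun t : Rn n => (1 + ‖t‖) ^ (-e)) x]
    exact integrable_one_add_norm (by rw [finrank_euclideanSpace_fin]; linarith)
  apply Integrable.mono' hint.integrableOn
  · apply Measurable.aestronglyMeasurable
    fun_prop
  · rw [ae_restrict_iff' hS]
    filter_upwards with y hy
    have hpos : 0 < c * (1 + ‖x - y‖) := by positivity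
    rw [Real.norm_eq_abs, abs_of_nonneg (Real.rpow_nonneg (norm_nonneg _) _)]
    calc ‖x - g y‖ ^ (-e) ≤ (c * (1 + ‖x - y‖)) ^ (-e) :=
          Real.rpow_le_rpow_of_nonpos hpos (key y hy) (by linarith)
      _ = c ^ (-e) * (1 + ‖x - y‖) ^ (-e) :=
          Real.mul_rpow hc.le (by positivity)

/-- Main lower-bound estimate from a ball inside the set. -/
lemma lower_aux (hn : 0 < n) {α : ℝ} (hα : 0 < α) {x : Rn n} (hx : 0 < ‖x‖)
    {S : Set (Rn n)} {c : Rn n} (hball : ball c ‖x‖ ⊆ S)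
    {f : Rn n → ℝ} (hint : IntegrableOn f S) (hf0 : ∀ y, 0 ≤ f y)
    (hlb : ∀ y ∈ ball c ‖x‖, (5 * ‖x‖) ^ (-((n : ℝ) + α)) ≤ f y) :
    (volume (ball (0 : Rn n) 1)).toReal * 5 ^ (-((n : ℝ) + α)) * ‖x‖ ^ (-α)
      ≤ ∫ y in S, f y := by
  haveI : Nontrivial (Rn n) :=
    Module.nontrivial_of_finrank_pos (R := ℝ) (by rw [finrank_euclideanSpace_fin]; exact hn)
  set e : ℝ := (n : ℝ) + α with he_def
  have h1 : (5 * ‖x‖) ^ (-e) * (volume (ball c ‖x‖)).toReal ≤ ∫ y in ball c ‖x‖, f y :=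
    by have := setIntegral_ge_of_const_le_real measurableSet_ball measure_ball_lt_top.ne hlb
        (hint.mono_set hball)
       exact this
  have h2 : ∫ y in ball c ‖x‖, f y ≤ ∫ y in S, f y :=
    setIntegral_mono_set hint (Eventually.of_forall fun y => hf0 y)
      (HasSubset.Subset.eventuallyLE hball)
  refine le_trans ?_ (h1.trans h2)
  have hvol : (volume (ball c ‖x‖)).toReal
      = ‖x‖ ^ n * (volume (ball (0 : Rn n) 1)).toReal := by
    rw [Measure.addHaar_ball volume c hx.le, finrank_euclideanSpace_fin,
      ENNReal.toReal_mul, ENNReal.toReal_ofReal (by positivity)]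
  rw [hvol]
  have hmul : (5 * ‖x‖) ^ (-e) = 5 ^ (-e) * ‖x‖ ^ (-e) :=
    Real.mul_rpow (by norm_num) hx.le
  rw [hmul]
  have hpow : (‖x‖ : ℝ) ^ n * ‖x‖ ^ (-e) = ‖x‖ ^ (-α) := by
    rw [← Real.rpow_natCast ‖x‖ n, ← Real.rpow_add hx]
    congr 1
    rw [he_def]; ring
  calc (volume (ball (0 : Rn n) 1)).toReal * 5 ^ (-e) * ‖x‖ ^ (-α)
      = 5 ^ (-e) * ((volume (ball (0 : Rn n) 1)).toReal * (‖x‖ ^ n * ‖x‖ ^ (-e))) := by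
        rw [hpow]; ring
    _ = 5 ^ (-e) * ‖x‖ ^ (-e) * (‖x‖ ^ n * (volume (ball (0 : Rn n) 1)).toReal) := by ring
    _ ≤ 5 ^ (-e) * ‖x‖ ^ (-e) * (‖x‖ ^ n * (volume (ball (0 : Rn n) 1)).toReal) := le_refl _

end HKAux

/-- **Half-space kernel lower bound at infinity.** -/
theorem halfspace_kernel_lower_bound_at_infinity
    (n : ℕ) (hn : 0 < n) (α : ℝ) (hα0 : 0 < α) (hα2 : α < 2) :
    ∃ C > (0 : ℝ), ∀ lam : ℝ, ∃ R > (0 : ℝ), ∀ x ∈ SigmaLam hn lam, R ≤ ‖x‖ →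
      C * ‖x‖ ^ (-α) ≤
        (∫ y in {y : Rn n | lam < y ⟨0, hn⟩}, ‖x - y‖ ^ (-((n : ℝ) + α))) ∧
      C * ‖x‖ ^ (-α) ≤
        ∫ y in SigmaLam hn lam, ‖x - reflPt hn lam y‖ ^ (-((n : ℝ) + α)) := by
  classical
  set i0 : Fin n := ⟨0, hn⟩ with hi0
  set e : ℝ := (n : ℝ) + α with he_def
  have he : 0 < e := by positivity
  set C : ℝ := (volume (ball (0 : Rn n) 1)).toReal * 5 ^ (-e) with hC_def
  haveI : Nontrivial (Rn n) :=
    Module.nontrivial_of_finrank_pos (R := ℝ) (by rw [finrank_euclideanSpace_fin]; exact hn)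
  have hCpos : 0 < C := by
    apply mul_pos
    · exact ENNReal.toReal_pos (measure_ball_pos volume _ one_pos).ne' measure_ball_lt_top.ne
    · positivity
  refine ⟨C, hCpos, fun lam => ⟨max 1 |lam|, lt_of_lt_of_le one_pos (le_max_left _ _), ?_⟩⟩
  intro x hxS hRx
  have hx1 : (1 : ℝ) ≤ ‖x‖ := le_trans (le_max_left _ _) hRx
  have hx : (0 : ℝ) < ‖x‖ := lt_of_lt_of_le one_pos hx1
  have hlamx : |lam| ≤ ‖x‖ := le_trans (le_max_right _ _) hRx
  have hxlam : x i0 < lam := hxS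
  have hx0 : -‖x‖ ≤ x i0 := by
    have := HKAux.abs_coord_le_norm x i0
    rw [abs_le] at this; exact this.1
  set δ : ℝ := lam - x i0 with hδ_def
  have hδ : 0 < δ := by rw [hδ_def]; linarith
  -- measurability of the two sets
  have hcoord : Continuous (fun y : Rn n => y i0) := (EuclideanSpace.proj i0).continuous
  have hS1 : MeasurableSet {y : Rn n | lam < y i0} :=
    measurableSet_lt measurable_const hcoord.measurable
  have hS2 : MeasurableSet (SigmaLam hn lam) :=
    measurableSet_lt hcoord.measurable measurable_const
  -- the centers
  set p : Rn n := x + (4 * ‖x‖) • EuclideanSpace.single i0 (1 : ℝ) with hp_def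
  set q : Rn n := reflPt hn lam p with hq_def
  have hp0 : p i0 = x i0 + 4 * ‖x‖ := by
    rw [hp_def]
    simp [PiLp.add_apply, PiLp.smul_apply, EuclideanSpace.single_apply]
  have hxp : ‖x - p‖ = 4 * ‖x‖ := by
    have : x - p = -((4 * ‖x‖) • EuclideanSpace.single i0 (1 : ℝ)) := by
      rw [hp_def]; abel
    rw [this, norm_neg, norm_smul, EuclideanSpace.norm_single]
    simp [abs_of_nonneg (by positivity : (0:ℝ) ≤ 4 * ‖x‖)]
  -- coordinate distance bound
  have habs : ∀ y : Rn n, ∀ z : Rn n, |y i0 - z i0| ≤ ‖y - z‖ := by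
    intro y z
    have := HKAux.abs_coord_le_norm (y - z) i0
    simpa [PiLp.sub_apply] using this
  -- Part 1 : ball p ‖x‖ ⊆ {y | lam < y i0}
  have hball1 : ball p ‖x‖ ⊆ {y : Rn n | lam < y i0} := by
    intro y hy
    rw [mem_ball, dist_eq_norm] at hy
    have h1 := habs y p
    have h2 : |y i0 - p i0| ≤ ‖y - p‖ := h1
    rw [abs_le] at h2
    have : p i0 - ‖x‖ < y i0 := by
      have := h2.1
      nlinarith [hy]
    have hlam2 : lam < 2 * ‖x‖ := lt_of_le_of_lt (le_abs_self lam) (by linarith)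
    rw [mem_setOf_eq]
    rw [hp0] at this
    linarith
  -- Part 2 : ball q ‖x‖ ⊆ SigmaLam
  have hq0 : q i0 = 2 * lam - (x i0 + 4 * ‖x‖) := by
    rw [hq_def, HKAux.reflPt_apply_same, hp0]
  have hball2 : ball q ‖x‖ ⊆ SigmaLam hn lam := by
    intro y hy
    rw [mem_ball, dist_eq_norm] at hy
    have h2 : |y i0 - q i0| ≤ ‖y - q‖ := habs y q
    rw [abs_le] at h2
    have hy0 : y i0 < q i0 + ‖x‖ := by
      have := h2.2
      nlinarith [hy]
    have hlam2 : lam < 2 * ‖x‖ := lt_of_le_of_lt (le_abs_self lam) (by linarith)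
    rw [SigmaLam, mem_setOf_eq]
    rw [hq0] at hy0
    linarith
  -- kernel lower bounds on the balls
  have hkb1 : ∀ y ∈ ball p ‖x‖, (5 * ‖x‖) ^ (-e) ≤ ‖x - y‖ ^ (-e) := by
    intro y hy
    have hyS := hball1 hy
    rw [mem_setOf_eq] at hyS
    have hlow : δ ≤ ‖x - y‖ := by
      have := habs x y
      rw [abs_le] at this
      have := this.1
      rw [hδ_def]; linarith
    have hup : ‖x - y‖ ≤ 5 * ‖x‖ := by
      rw [mem_ball, dist_eq_norm] at hy
      calc ‖x - y‖ ≤ ‖x - p‖ + ‖p - y‖ := norm_sub_le_norm_sub_add_norm_sub _ _ _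
        _ ≤ 4 * ‖x‖ + ‖x‖ := by
            rw [hxp]
            have : ‖p - y‖ = ‖y - p‖ := norm_sub_rev _ _
            rw [this]; linarith
        _ = 5 * ‖x‖ := by ring
    exact Real.rpow_le_rpow_of_nonpos (lt_of_lt_of_le hδ hlow) hup (by linarith)
  have hkb2 : ∀ y ∈ ball q ‖x‖, (5 * ‖x‖) ^ (-e) ≤ ‖x - reflPt hn lam y‖ ^ (-e) := by
    intro y hy
    have hyS := hball2 hy
    rw [SigmaLam, mem_setOf_eq] at hyS
    have hry0 : reflPt hn lam y i0 = 2 * lam - y i0 := HKAux.reflPt_apply_same hn lam y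
    have hlow : δ ≤ ‖x - reflPt hn lam y‖ := by
      have h := habs x (reflPt hn lam y)
      rw [abs_le] at h
      have := h.1
      rw [hry0] at this
      rw [hδ_def]; linarith
    have hup : ‖x - reflPt hn lam y‖ ≤ 5 * ‖x‖ := by
      have hpq : ‖p - reflPt hn lam y‖ = ‖q - y‖ := by
        rw [← dist_eq_norm, ← dist_eq_norm, ← HKAux.dist_reflPt hn lam q y, hq_def,
          HKAux.reflPt_reflPt]
      rw [mem_ball, dist_eq_norm] at hy
      calc ‖x - reflPt hn lam y‖ ≤ ‖x - p‖ + ‖p - reflPt hn lam y‖ :=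
            norm_sub_le_norm_sub_add_norm_sub _ _ _
        _ ≤ 4 * ‖x‖ + ‖x‖ := by
            rw [hxp, hpq]
            have : ‖q - y‖ = ‖y - q‖ := norm_sub_rev _ _
            rw [this]; linarith
        _ = 5 * ‖x‖ := by ring
    exact Real.rpow_le_rpow_of_nonpos (lt_of_lt_of_le hδ hlow) hup (by linarith)
  -- integrability
  have hint1 : IntegrableOn (fun y => ‖x - y‖ ^ (-e)) {y : Rn n | lam < y i0} := by
    have := HKAux.integrableOn_kernel hn hα0 x hS1 measurable_id hδ
      (g := id) ?_ ?_
    · exact this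
    · intro y hy
      rw [mem_setOf_eq] at hy
      have h := habs x y
      rw [abs_le] at h
      have := h.1
      simp only [id]
      rw [hδ_def]; linarith
    · intro y _; simp
  have hint2 : IntegrableOn (fun y => ‖x - reflPt hn lam y‖ ^ (-e)) (SigmaLam hn lam) := by
    apply HKAux.integrableOn_kernel hn hα0 x hS2 (HKAux.measurable_reflPt hn lam) hδ
    · intro y hy
      rw [SigmaLam, mem_setOf_eq] at hy
      have h := habs x (reflPt hn lam y)
      rw [abs_le] at h
      have h1 := h.1
      rw [HKAux.reflPt_apply_same] at h1
      rw [hδ_def]; linarith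
    · intro y hy
      rw [SigmaLam, mem_setOf_eq] at hy
      exact HKAux.norm_sub_le_norm_sub_reflPt hn lam hxlam hy
  constructor
  · exact HKAux.lower_aux hn hα0 hx hball1 hint1
      (fun y => Real.rpow_nonneg (norm_nonneg _) _) hkb1
  · exact HKAux.lower_aux hn hα0 hx hball2 hint2
      (fun y => Real.rpow_nonneg (norm_nonneg _) _) hkb2

end
end

section
/- (Narrow-slab kernel lower bound.) Let n ≥ 1 and α ∈ (0,2). There exists a constant C > 0 depending only on n and α such that for every λ ∈ ℝ, every l > 0, and every x ∈ ℝⁿ with λ - l < x₁ < λ, one has ∫_{{y ∈ ℝⁿ : y₁ > λ}} |x - y|^{-(n+α)} dy ≥ C·l^{-α}. Equivalently, ∫_{Σ_λ} |x - y^λ|^{-(n+α)} dy ≥ C·l^{-α}. -/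
open MeasureTheory Metric Filter Set Topology

noncomputable section

/-- A coordinate is dominated by the Euclidean norm. -/
lemma abs_coord_le_norm {n : ℕ} (x : Rn n) (i : Fin n) : |x i| ≤ ‖x‖ := by
  rw [EuclideanSpace.norm_eq, ← Real.sqrt_sq_eq_abs]
  apply Real.sqrt_le_sqrt
  calc x i ^ 2 = ‖x i‖ ^ 2 := by rw [Real.norm_eq_abs, sq_abs]
    _ ≤ ∑ j, ‖x j‖ ^ 2 :=
      Finset.single_le_sum (f := fun j => ‖x j‖ ^ 2) (fun j _ => sq_nonneg _)
        (Finset.mem_univ i)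

lemma reflPt_norm_sub {n : ℕ} (hn : 0 < n) (lam : ℝ) (x y : Rn n) :
    ‖x - reflPt hn lam y‖ = ‖reflPt hn lam x - y‖ := by
  rw [EuclideanSpace.norm_eq, EuclideanSpace.norm_eq]
  congr 1
  refine Finset.sum_congr rfl fun i _ => ?_
  by_cases h : i = ⟨0, hn⟩
  · subst h
    have e1 : (x - reflPt hn lam y) ⟨0, hn⟩ = x ⟨0, hn⟩ - (2 * lam - y ⟨0, hn⟩) := by
      simp [reflPt]
    have e2 : (reflPt hn lam x - y) ⟨0, hn⟩ = (2 * lam - x ⟨0, hn⟩) - y ⟨0, hn⟩ := by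
      simp [reflPt]
    rw [e1, e2,
      show x ⟨0, hn⟩ - (2 * lam - y ⟨0, hn⟩) = -((2 * lam - x ⟨0, hn⟩) - y ⟨0, hn⟩) by ring,
      norm_neg]
  · simp [reflPt, Function.update_of_ne h]

/-- Integrability of the kernel away from the singularity. -/
lemma kernel_integrableOn {n : ℕ} {α : ℝ} (hα0 : 0 < α) (x : Rn n) {r : ℝ} (hr : 0 < r) :
    IntegrableOn (fun y : Rn n => ‖x - y‖ ^ (-((n : ℝ) + α)))
      {y : Rn n | r ≤ ‖x - y‖} := by
  set s : ℝ := (n : ℝ) + α with hs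
  have hs0 : 0 < s := by positivity
  set M : ℝ := (1 + ‖x‖) / r + 1 with hM
  have hMpos : 0 < M := by positivity
  have hA : MeasurableSet {y : Rn n | r ≤ ‖x - y‖} :=
    measurableSet_le measurable_const ((measurable_const.sub measurable_id).norm)
  have hg : Integrable (fun y : Rn n => M ^ s * (1 + ‖y‖) ^ (-s)) := by
    refine (integrable_one_add_norm ?_).const_mul _
    rw [finrank_euclideanSpace_fin]
    linarith
  refine Integrable.mono' hg.integrableOn ?_ ?_
  · exact (((measurable_const.sub measurable_id).norm.pow_const _).aestronglyMeasurable).restrict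
  · rw [ae_restrict_iff' hA]
    filter_upwards with y hy
    have hxy : (0 : ℝ) < ‖x - y‖ := lt_of_lt_of_le hr hy
    have key : 1 + ‖y‖ ≤ M * ‖x - y‖ := by
      have h1 : ‖y‖ - ‖x‖ ≤ ‖x - y‖ := by
        have := norm_sub_norm_le y x
        rwa [norm_sub_rev] at this
      have h2 : 1 + ‖x‖ ≤ ((1 + ‖x‖) / r) * ‖x - y‖ := by
        have := mul_le_mul_of_nonneg_left hy (by positivity : (0 : ℝ) ≤ (1 + ‖x‖) / r)
        calc 1 + ‖x‖ = ((1 + ‖x‖) / r) * r := by field_simp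
          _ ≤ _ := this
      rw [hM]
      nlinarith [h1, h2]
    have hdiv : (1 + ‖y‖) / M ≤ ‖x - y‖ := (div_le_iff₀ hMpos).2 (by linarith)
    have h2 : ((1 + ‖y‖) / M) ^ s ≤ ‖x - y‖ ^ s :=
      Real.rpow_le_rpow (by positivity) hdiv hs0.le
    have hb : (0 : ℝ) < (1 + ‖y‖) / M := by positivity
    have h3 : (‖x - y‖ ^ s)⁻¹ ≤ (((1 + ‖y‖) / M) ^ s)⁻¹ :=
      inv_anti₀ (Real.rpow_pos_of_pos hb s) h2
    have h4 : (((1 + ‖y‖) / M) ^ s)⁻¹ = M ^ s * (1 + ‖y‖) ^ (-s) := by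
      rw [Real.div_rpow (by positivity) hMpos.le, Real.rpow_neg (by positivity)]
      field_simp
    rw [Real.norm_of_nonneg (Real.rpow_nonneg (norm_nonneg _) _),
      Real.rpow_neg (norm_nonneg _)]
    calc (‖x - y‖ ^ s)⁻¹ ≤ (((1 + ‖y‖) / M) ^ s)⁻¹ := h3
      _ = M ^ s * (1 + ‖y‖) ^ (-s) := h4

/-- Core lower bound: integrate over a ball of radius `l` inside `S` at distance `≤ 3l`. -/
lemma core_bound {n : ℕ} (hn : 0 < n) {α : ℝ} (hα0 : 0 < α)
    (x p : Rn n) {l r : ℝ} (hl : 0 < l) (hr : 0 < r)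
    {S : Set (Rn n)} (hS : MeasurableSet S) (hball : ball p l ⊆ S)
    (hfar : ∀ y ∈ S, r ≤ ‖x - y‖) (hnear : ∀ y ∈ ball p l, ‖x - y‖ ≤ 3 * l) :
    (volume (ball (0 : Rn n) 1)).toReal * 3 ^ (-((n : ℝ) + α)) * l ^ (-α)
      ≤ ∫ y in S, ‖x - y‖ ^ (-((n : ℝ) + α)) := by
  haveI : Nontrivial (Rn n) := ⟨EuclideanSpace.single ⟨0, hn⟩ 1, 0, by
    intro h
    have := congrFun (congrArg (fun z : Rn n => (z : Fin n → ℝ)) h) ⟨0, hn⟩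
    simp [EuclideanSpace.single_apply] at this⟩
  set s : ℝ := (n : ℝ) + α with hs
  have hs0 : 0 < s := by positivity
  set V := (volume (ball (0 : Rn n) 1)).toReal with hV
  set f : Rn n → ℝ := fun y => ‖x - y‖ ^ (-s) with hf
  have hInt : IntegrableOn f S := by
    refine (kernel_integrableOn hα0 x hr).mono_set ?_
    exact fun y hy => hfar y hy
  have hnonneg : ∀ y, 0 ≤ f y := fun y => Real.rpow_nonneg (norm_nonneg _) _
  have step1 : ∫ y in ball p l, f y ≤ ∫ y in S, f y := by
    refine setIntegral_mono_set hInt (ae_of_all _ hnonneg) ?_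
    exact HasSubset.Subset.eventuallyLE hball
  have step2 : (3 * l) ^ (-s) * (volume (ball p l)).toReal ≤ ∫ y in ball p l, f y := by
    refine setIntegral_ge_of_const_le_real measurableSet_ball measure_ball_lt_top.ne
      (fun y hy => ?_) (hInt.mono_set hball)
    exact Real.rpow_le_rpow_of_nonpos
      (lt_of_lt_of_le hr (hfar y (hball hy))) (hnear y hy) (by linarith)
  have hvol : (volume (ball p l)).toReal = l ^ n * V := by
    rw [Measure.addHaar_ball volume p hl.le, finrank_euclideanSpace_fin,
      ENNReal.toReal_mul, ENNReal.toReal_ofReal (by positivity)]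
  have hls : l ^ ((n : ℝ)) * l ^ (-s) = l ^ (-α) := by
    rw [← Real.rpow_add hl]
    congr 1
    rw [hs]; ring
  have harith : (3 * l) ^ (-s) * (l ^ n * V) = V * 3 ^ (-s) * l ^ (-α) := by
    calc (3 * l) ^ (-s) * (l ^ n * V)
        = 3 ^ (-s) * l ^ (-s) * (l ^ ((n : ℝ)) * V) := by
          rw [Real.mul_rpow (by norm_num) hl.le, Real.rpow_natCast]
      _ = V * 3 ^ (-s) * (l ^ ((n : ℝ)) * l ^ (-s)) := by ring
      _ = V * 3 ^ (-s) * l ^ (-α) := by rw [hls]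
  calc V * 3 ^ (-s) * l ^ (-α) = (3 * l) ^ (-s) * (volume (ball p l)).toReal := by
        rw [hvol, harith]
    _ ≤ ∫ y in ball p l, f y := step2
    _ ≤ ∫ y in S, f y := step1

/-- **Narrow-slab kernel lower bound.** -/
theorem narrow_slab_kernel_lower_bound
    (n : ℕ) (hn : 0 < n) (α : ℝ) (hα0 : 0 < α) (hα2 : α < 2) :
    ∃ C > (0 : ℝ), ∀ (lam l : ℝ), 0 < l → ∀ x : Rn n,
      lam - l < x ⟨0, hn⟩ → x ⟨0, hn⟩ < lam →
      C * l ^ (-α) ≤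
        (∫ y in {y : Rn n | lam < y ⟨0, hn⟩}, ‖x - y‖ ^ (-((n : ℝ) + α))) ∧
      C * l ^ (-α) ≤
        ∫ y in SigmaLam hn lam, ‖x - reflPt hn lam y‖ ^ (-((n : ℝ) + α)) := by
  classical
  set i0 : Fin n := ⟨0, hn⟩ with hi0
  set V := (volume (ball (0 : Rn n) 1)).toReal with hVdef
  have hVpos : 0 < V := ENNReal.toReal_pos
    (measure_ball_pos volume _ one_pos).ne' measure_ball_lt_top.ne
  have hev : Measurable (fun y : Rn n => y i0) :=
    (PiLp.proj (𝕜 := ℝ) 2 (fun _ : Fin n => ℝ) i0).continuous.measurable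
  refine ⟨V * 3 ^ (-((n : ℝ) + α)), by positivity, ?_⟩
  intro lam l hl x hx1 hx2
  have hr : (0 : ℝ) < lam - x i0 := by linarith
  constructor
  · -- first integral
    set p : Rn n := x + EuclideanSpace.single i0 (2 * l) with hp
    have hpc : p i0 = x i0 + 2 * l := by
      simp [hp, EuclideanSpace.single_apply]
    have hS : MeasurableSet {y : Rn n | lam < y i0} :=
      measurableSet_lt measurable_const hev
    have hball : ball p l ⊆ {y : Rn n | lam < y i0} := by
      intro y hy
      have h1 : |(y - p) i0| ≤ ‖y - p‖ := abs_coord_le_norm _ _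
      have h2 : (y - p) i0 = y i0 - p i0 := by simp
      have h3 : ‖y - p‖ < l := by rwa [mem_ball, dist_eq_norm] at hy
      have := abs_lt.1 (lt_of_le_of_lt (h2 ▸ h1) h3)
      have : y i0 > p i0 - l := by linarith [this.1]
      simp only [mem_setOf_eq]
      rw [hpc] at this
      linarith
    have hfar : ∀ y ∈ {y : Rn n | lam < y i0}, lam - x i0 ≤ ‖x - y‖ := by
      intro y hy
      have h1 : |(x - y) i0| ≤ ‖x - y‖ := abs_coord_le_norm _ _
      have h2 : (x - y) i0 = x i0 - y i0 := by simp
      have hy' : lam < y i0 := hy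
      have : lam - x i0 ≤ |x i0 - y i0| := by
        rw [abs_sub_comm, abs_of_pos (by linarith)]
        linarith
      rw [h2] at h1
      linarith
    have hnear : ∀ y ∈ ball p l, ‖x - y‖ ≤ 3 * l := by
      intro y hy
      have h3 : ‖y - p‖ < l := by rwa [mem_ball, dist_eq_norm] at hy
      have hxp : ‖x - p‖ = 2 * l := by
        rw [hp, show x - (x + EuclideanSpace.single i0 (2 * l))
            = -(EuclideanSpace.single i0 (2 * l)) by abel, norm_neg,
          EuclideanSpace.norm_single, Real.norm_eq_abs, abs_of_pos (by linarith)]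
      calc ‖x - y‖ = ‖(x - p) + (p - y)‖ := by abel_nf
        _ ≤ ‖x - p‖ + ‖p - y‖ := norm_add_le _ _
        _ = 2 * l + ‖y - p‖ := by rw [hxp, norm_sub_rev]
        _ ≤ 3 * l := by linarith
    exact core_bound hn hα0 x p hl hr hS hball hfar hnear
  · -- second integral
    set x' : Rn n := reflPt hn lam x with hx'
    have hx'c : x' i0 = 2 * lam - x i0 := by
      show (reflPt hn lam x) i0 = _
      simp [reflPt, hi0]
    have hrw : ∀ y : Rn n, ‖x - reflPt hn lam y‖ ^ (-((n : ℝ) + α))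
        = ‖x' - y‖ ^ (-((n : ℝ) + α)) := fun y => by rw [reflPt_norm_sub]
    rw [show (fun y : Rn n => ‖x - reflPt hn lam y‖ ^ (-((n : ℝ) + α)))
        = fun y : Rn n => ‖x' - y‖ ^ (-((n : ℝ) + α)) from funext hrw]
    set p : Rn n := x' - EuclideanSpace.single i0 (2 * l) with hp
    have hpc : p i0 = x' i0 - 2 * l := by
      simp [hp, EuclideanSpace.single_apply]
    have hS : MeasurableSet (SigmaLam hn lam) :=
      measurableSet_lt hev measurable_const
    have hball : ball p l ⊆ SigmaLam hn lam := by
      intro y hy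
      have h1 : |(y - p) i0| ≤ ‖y - p‖ := abs_coord_le_norm _ _
      have h2 : (y - p) i0 = y i0 - p i0 := by simp
      have h3 : ‖y - p‖ < l := by rwa [mem_ball, dist_eq_norm] at hy
      have h4 := abs_lt.1 (lt_of_le_of_lt (h2 ▸ h1) h3)
      show y i0 < lam
      rw [hpc, hx'c] at h4
      have := h4.2
      linarith
    have hfar : ∀ y ∈ SigmaLam hn lam, lam - x i0 ≤ ‖x' - y‖ := by
      intro y hy
      have h1 : |(x' - y) i0| ≤ ‖x' - y‖ := abs_coord_le_norm _ _
      have h2 : (x' - y) i0 = x' i0 - y i0 := by simp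
      have hy' : y i0 < lam := hy
      have : lam - x i0 ≤ |x' i0 - y i0| := by
        rw [abs_of_pos (by rw [hx'c]; linarith)]
        rw [hx'c]; linarith
      rw [h2] at h1
      linarith
    have hnear : ∀ y ∈ ball p l, ‖x' - y‖ ≤ 3 * l := by
      intro y hy
      have h3 : ‖y - p‖ < l := by rwa [mem_ball, dist_eq_norm] at hy
      have hxp : ‖x' - p‖ = 2 * l := by
        rw [hp, show x' - (x' - EuclideanSpace.single i0 (2 * l))
            = EuclideanSpace.single i0 (2 * l) by abel,
          EuclideanSpace.norm_single, Real.norm_eq_abs, abs_of_pos (by linarith)]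
      calc ‖x' - y‖ = ‖(x' - p) + (p - y)‖ := by abel_nf
        _ ≤ ‖x' - p‖ + ‖p - y‖ := norm_add_le _ _
        _ = 2 * l + ‖y - p‖ := by rw [hxp, norm_sub_rev]
        _ ≤ 3 * l := by linarith
    exact core_bound hn hα0 x' p hl hr hS hball hfar hnear

end
end
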